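/- arXiv:1806.09683 — 2 statements merged into one kernel-verified Lean document; each statement's English description precedes it below -/
import Mathlib

section
/- Let (H, I) be a crown in a graph G, i.e., I is an independent set, H = N(I), and there is a matching between H and I saturating all of H. Then mm(G) = mm(G - (H ∪ I)) + |H|. -/
/-- A matching in a simple graph `G`, given as a finite set of edges of `G`
that are pairwise vertex-disjoint. -/
def IsMatching {V : Type*} (G : SimpleGraph V) (M : Finset (Sym2 V)) : Prop :=
  (∀ e ∈ M, e ∈ G.edgeSet) ∧
    ∀ e ∈ M, ∀ f ∈ M, e ≠ f → ∀ v, v ∈ e → v ∉ f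

/-- The maximum cardinality of a matching in `G`. -/
noncomputable def mm {V : Type*} (G : SimpleGraph V) : ℕ :=
  sSup {n | ∃ M : Finset (Sym2 V), IsMatching G M ∧ M.card = n}

/-- The graph obtained from `G` by deleting the vertices in `S`
(the deleted vertices become isolated, which does not affect matchings). -/
def deleteVerts {V : Type*} (G : SimpleGraph V) (S : Set V) : SimpleGraph V where
  Adj a b := G.Adj a b ∧ a ∉ S ∧ b ∉ S
  symm := ⟨fun _ _ ⟨h, ha, hb⟩ => ⟨h.symm, hb, ha⟩⟩
  loopless := ⟨fun a ⟨h, _, _⟩ => G.loopless.irrefl a h⟩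

section Aux

variable {V : Type*} [Fintype V] [DecidableEq V]

lemma mm_bddAbove (G : SimpleGraph V) :
    BddAbove {n | ∃ M : Finset (Sym2 V), IsMatching G M ∧ M.card = n} :=
  ⟨Fintype.card (Sym2 V), fun _ ⟨M, _, hc⟩ => hc ▸ Finset.card_le_univ M⟩

lemma mm_nonempty (G : SimpleGraph V) :
    {n | ∃ M : Finset (Sym2 V), IsMatching G M ∧ M.card = n}.Nonempty :=
  ⟨0, ∅, ⟨fun e he => absurd he (by simp), fun e he => absurd he (by simp)⟩, rfl⟩

lemma mm_spec (G : SimpleGraph V) :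
    ∃ M : Finset (Sym2 V), IsMatching G M ∧ M.card = mm G :=
  Nat.sSup_mem (mm_nonempty G) (mm_bddAbove G)

lemma le_mm (G : SimpleGraph V) {M : Finset (Sym2 V)} (h : IsMatching G M) :
    M.card ≤ mm G :=
  le_csSup (mm_bddAbove G) ⟨M, h, rfl⟩

end Aux

/-- Crown rule: if `(H, I)` is a crown in `G` (that is, `I` is an independent set,
`H = N(I)`, and there is a matching `M` between `H` and `I` saturating all of `H`),
then `mm(G) = mm(G - (H ∪ I)) + |H|`. -/
theorem stmt2 {V : Type*} [Fintype V] [DecidableEq V] (G : SimpleGraph V)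
    (H I : Finset V)
    (hind : ∀ a ∈ I, ∀ b ∈ I, ¬ G.Adj a b)
    (hN : ∀ b, b ∈ H ↔ ∃ a ∈ I, G.Adj a b)
    (M : Finset (Sym2 V)) (hM : IsMatching G M)
    (hMbtw : ∀ e ∈ M, ∃ a ∈ H, ∃ b ∈ I, e = s(a, b))
    (hMsat : ∀ a ∈ H, ∃ e ∈ M, a ∈ e) :
    mm G = mm (deleteVerts G (↑H ∪ ↑I)) + H.card := by
  classical
  set S : Set V := ↑H ∪ ↑I with hSdef
  set G' := deleteVerts G S with hG'def
  have hSmem : ∀ v : V, v ∈ S ↔ v ∈ H ∨ v ∈ I := by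
    intro v; simp [hSdef]
  -- H and I are disjoint
  have hHI : ∀ x, x ∈ H → x ∉ I := by
    intro x hxH hxI
    obtain ⟨a, haI, hadj⟩ := (hN x).1 hxH
    exact hind a haI x hxI hadj
  -- every edge of M has all its vertices in H ∪ I
  have hMvert : ∀ e ∈ M, ∀ v ∈ e, v ∈ H ∨ v ∈ I := by
    intro e he v hv
    obtain ⟨a, haH, b, hbI, rfl⟩ := hMbtw e he
    rcases Sym2.mem_iff.1 hv with rfl | rfl
    · exact Or.inl haH
    · exact Or.inr hbI
  -- edges of a matching in G' avoid S
  have hG'vert : ∀ e ∈ G'.edgeSet, ∀ v ∈ e, v ∉ S := by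
    intro e
    induction e using Sym2.ind with
    | _ x y =>
      intro he v hv
      have hadj : G'.Adj x y := (SimpleGraph.mem_edgeSet _).1 he
      rcases Sym2.mem_iff.1 hv with rfl | rfl
      · exact (hadj : G.Adj v y ∧ v ∉ S ∧ y ∉ S).2.1
      · exact (hadj : G.Adj x v ∧ x ∉ S ∧ v ∉ S).2.2
  have hsub : ∀ e ∈ G'.edgeSet, e ∈ G.edgeSet := by
    intro e
    induction e using Sym2.ind with
    | _ x y =>
      intro he
      exact (SimpleGraph.mem_edgeSet _).2 ((SimpleGraph.mem_edgeSet _).1 he : G.Adj x y ∧ x ∉ S ∧ y ∉ S).1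
  -- |M| = |H|
  have hcardM : H.card = M.card := by
    apply Finset.card_bij (fun a _ => if h : ∃ e ∈ M, a ∈ e then h.choose else s(a, a))
    · intro a ha
      rw [dif_pos (hMsat a ha)]
      exact (hMsat a ha).choose_spec.1
    · intro a ha a' ha' heq
      by_contra hne
      rw [dif_pos (hMsat a ha), dif_pos (hMsat a' ha')] at heq
      obtain ⟨heM, haE⟩ := (hMsat a ha).choose_spec
      obtain ⟨heM', haE'⟩ := (hMsat a' ha').choose_spec
      rw [heq] at heM haE
      obtain ⟨x, hxH, y, hyI, hxy⟩ := hMbtw _ heM'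
      rw [hxy] at haE haE'
      rcases Sym2.mem_iff.1 haE with rfl | rfl <;>
        rcases Sym2.mem_iff.1 haE' with rfl | rfl
      · exact hne rfl
      · exact hHI a' ha' hyI
      · exact hHI a ha hyI
      · exact hne rfl
    · intro e he
      obtain ⟨a, haH, b, hbI, rfl⟩ := hMbtw e he
      refine ⟨a, haH, ?_⟩
      rw [dif_pos (hMsat a haH)]
      obtain ⟨hfM, haF⟩ := (hMsat a haH).choose_spec
      by_contra hne
      exact hM.2 _ hfM _ he hne a haF (Sym2.mem_mk_left a b)
  obtain ⟨M', hM', hcardM'⟩ := mm_spec G'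
  obtain ⟨N, hNm, hcardN⟩ := mm_spec G
  apply le_antisymm
  · -- mm G ≤ mm G' + |H|
    set p : Sym2 V → Prop := fun e => ∀ v ∈ e, v ∉ S with hpdef
    have hsplit := Finset.card_filter_add_card_filter_not
      (s := N) (p := p)
    set N₂ := N.filter p with hN2def
    set N₁ := N.filter (fun e => ¬ p e) with hN1def
    -- N₂ is a matching in G'
    have hN₂match : IsMatching G' N₂ := by
      constructor
      · intro e he
        have heN := Finset.mem_filter.1 he
        revert heN
        induction e using Sym2.ind with
        | _ x y =>
          intro ⟨heN, hpe⟩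
          have hadj : G.Adj x y := (SimpleGraph.mem_edgeSet _).1 (hNm.1 _ heN)
          refine (SimpleGraph.mem_edgeSet _).2 (show G.Adj x y ∧ x ∉ S ∧ y ∉ S from ⟨hadj, ?_, ?_⟩)
          · exact hpe x (Sym2.mem_mk_left x y)
          · exact hpe y (Sym2.mem_mk_right x y)
      · intro e he f hf hne v hv hvf
        exact hNm.2 e (Finset.mem_filter.1 he).1 f (Finset.mem_filter.1 hf).1 hne v hv hvf
    -- each edge of N₁ has a vertex in H
    have hN1H : ∀ e ∈ N₁, ∃ a ∈ H, a ∈ e := by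
      intro e he
      have heN := Finset.mem_filter.1 he
      obtain ⟨heN, hpe⟩ := heN
      have hpe' : ∃ v ∈ e, v ∈ S := by
        by_contra hc
        push_neg at hc
        exact hpe hc
      obtain ⟨v, hve, hvS⟩ := hpe'
      rcases (hSmem v).1 hvS with hvH | hvI
      · exact ⟨v, hvH, hve⟩
      · -- v ∈ I; find the other endpoint, which is in H
        have hedge := hNm.1 e heN
        revert hedge hve
        induction e using Sym2.ind with
        | _ x y =>
          intro hve hedge
          have hadj : G.Adj x y := (SimpleGraph.mem_edgeSet _).1 hedge
          rcases Sym2.mem_iff.1 hve with rfl | rfl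
          · exact ⟨y, (hN y).2 ⟨v, hvI, hadj⟩, Sym2.mem_mk_right v y⟩
          · exact ⟨x, (hN x).2 ⟨v, hvI, hadj.symm⟩, Sym2.mem_mk_left x v⟩
    -- |N₁| ≤ |H|
    have hN1card : N₁.card ≤ H.card := by
      apply Finset.card_le_card_of_injOn
        (fun e : Sym2 V => if h : ∃ a ∈ H, a ∈ e then h.choose else (Quot.out e).1)
      · intro e he
        dsimp only
        rw [dif_pos (hN1H e he)]
        exact (hN1H e he).choose_spec.1
      · intro e he f hf heq
        simp only [Finset.mem_coe] at he hf
        dsimp only at heq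
        by_contra hne
        rw [dif_pos (hN1H e he), dif_pos (hN1H f hf)] at heq
        obtain ⟨haH, hae⟩ := (hN1H e he).choose_spec
        obtain ⟨haH', haf⟩ := (hN1H f hf).choose_spec
        rw [heq] at hae
        exact hNm.2 e (Finset.mem_filter.1 he).1 f (Finset.mem_filter.1 hf).1 hne _ hae haf
    have hN2card : N₂.card ≤ mm G' := le_mm G' hN₂match
    calc mm G = N.card := hcardN.symm
      _ = N₁.card + N₂.card := by omega
      _ ≤ mm G' + H.card := by omega
  · -- mm G' + |H| ≤ mm G
    have hdisj : Disjoint M' M := by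
      rw [Finset.disjoint_left]
      intro e heM' heM
      obtain ⟨a, haH, b, hbI, rfl⟩ := hMbtw e heM
      exact hG'vert _ (hM'.1 _ heM') a (Sym2.mem_mk_left a b)
        ((hSmem a).2 (Or.inl haH))
    have hunion : IsMatching G (M' ∪ M) := by
      constructor
      · intro e he
        rcases Finset.mem_union.1 he with h | h
        · exact hsub _ (hM'.1 _ h)
        · exact hM.1 _ h
      · intro e he f hf hne v hv hvf
        rcases Finset.mem_union.1 he with he | he <;>
          rcases Finset.mem_union.1 hf with hf | hf
        · exact hM'.2 e he f hf hne v hv hvf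
        · exact hG'vert _ (hM'.1 _ he) v hv ((hSmem v).2 (hMvert f hf v hvf))
        · exact (hG'vert _ (hM'.1 _ hf) v hvf ((hSmem v).2 (hMvert e he v hv)))
        · exact hM.2 e he f hf hne v hv hvf
    have := le_mm G hunion
    rw [Finset.card_union_of_disjoint hdisj] at this
    omega
end

section
/- Let G be an edge-weighted graph and P = u v_1 … v_{ℓ-1} v a maximal path (all internal vertices have degree 2 in G; endpoints u, v do not; ℓ ≥ 3). Let G' be obtained from G by deleting the internal vertices of P, adding a new vertex z with edges uz of weight ω(P-v) - ω(P-u-v) and vz of weight ω(P-u) - ω(P-u-v), and setting the weight of edge uv to max{ω(uv), ω(P) - ω(P-u-v)} (taking ω(uv) = 0 if uv ∉ E, and adding the edge uv). Then ω(G') = ω(G) - ω(P-u-v). -/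
set_option linter.unusedSectionVars false
set_option maxHeartbeats 1000000

/-- The maximum weight of a matching in `G` with edge weights `w`. -/
noncomputable def wmax {V : Type*} (G : SimpleGraph V) (w : Sym2 V → ℕ) : ℕ :=
  sSup {n | ∃ M : Finset (Sym2 V), IsMatching G M ∧ ∑ e ∈ M, w e = n}

/-- The path graph on the vertices `p 0, p 1, …, p ℓ`. -/
def pathOn {V : Type*} (ℓ : ℕ) (p : ℕ → V) : SimpleGraph V :=
  SimpleGraph.fromEdgeSet {e | ∃ i < ℓ, e = s(p i, p (i + 1))}

/-- The graph obtained from `G` by removing all internal vertices of the path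
`p 0, …, p ℓ`, adding a fresh vertex `z` (`none`) joined to the endpoints
`u = p 0` and `v = p ℓ`, and adding the edge `uv`. -/
def pathReduced {V : Type*} (G : SimpleGraph V) (ℓ : ℕ) (p : ℕ → V) :
    SimpleGraph (Option V) where
  Adj a b :=
    match a, b with
    | some a, some b => a ≠ b ∧ (∀ i, 0 < i → i < ℓ → p i ≠ a) ∧
        (∀ i, 0 < i → i < ℓ → p i ≠ b) ∧
        (G.Adj a b ∨ (a = p 0 ∧ b = p ℓ) ∨ (a = p ℓ ∧ b = p 0))
    | some a, none => a = p 0 ∨ a = p ℓ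
    | none, some b => b = p 0 ∨ b = p ℓ
    | none, none => False
  symm := by
    constructor
    rintro (_ | a) (_ | b) h
    · exact h.elim
    · exact h
    · exact h
    · obtain ⟨h1, h2, h3, h4⟩ := h
      refine ⟨h1.symm, h3, h2, ?_⟩
      rcases h4 with h4 | ⟨ha, hb⟩ | ⟨ha, hb⟩
      · exact Or.inl h4.symm
      · exact Or.inr (Or.inr ⟨hb, ha⟩)
      · exact Or.inr (Or.inl ⟨hb, ha⟩)
  loopless := by
    constructor
    rintro (_ | a) h
    · exact h.elim
    · exact h.1 rfl

section Helpers
variable {V : Type*} [Fintype V] [DecidableEq V]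

lemma mset_nonempty (G : SimpleGraph V) (w : Sym2 V → ℕ) :
    {n | ∃ M : Finset (Sym2 V), IsMatching G M ∧ ∑ e ∈ M, w e = n}.Nonempty :=
  ⟨0, ∅, ⟨by simp [IsMatching], by simp⟩, by simp⟩

lemma mset_bdd (G : SimpleGraph V) (w : Sym2 V → ℕ) :
    BddAbove {n | ∃ M : Finset (Sym2 V), IsMatching G M ∧ ∑ e ∈ M, w e = n} := by
  refine ⟨∑ e ∈ Finset.univ, w e, ?_⟩
  rintro n ⟨M, _, rfl⟩
  exact Finset.sum_le_sum_of_subset (Finset.subset_univ M)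

lemma le_wmax {G : SimpleGraph V} {w : Sym2 V → ℕ} {M : Finset (Sym2 V)}
    (h : IsMatching G M) : ∑ e ∈ M, w e ≤ wmax G w :=
  le_csSup (mset_bdd G w) ⟨M, h, rfl⟩

lemma wmax_le {G : SimpleGraph V} {w : Sym2 V → ℕ} {b : ℕ}
    (h : ∀ M, IsMatching G M → ∑ e ∈ M, w e ≤ b) : wmax G w ≤ b :=
  csSup_le (mset_nonempty G w) (by rintro n ⟨M, hM, rfl⟩; exact h M hM)

lemma exists_wmax (G : SimpleGraph V) (w : Sym2 V → ℕ) :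
    ∃ M, IsMatching G M ∧ ∑ e ∈ M, w e = wmax G w :=
  Nat.sSup_mem (mset_nonempty G w) (mset_bdd G w)

lemma IsMatching.mono {G H : SimpleGraph V} {M : Finset (Sym2 V)}
    (hGH : G ≤ H) (h : IsMatching G M) : IsMatching H M :=
  ⟨fun e he => SimpleGraph.edgeSet_mono hGH (h.1 e he), h.2⟩

lemma wmax_mono {G H : SimpleGraph V} (hGH : G ≤ H) (w : Sym2 V → ℕ) :
    wmax G w ≤ wmax H w :=
  wmax_le fun _ hM => le_wmax (hM.mono hGH)

lemma matching_union {W : Type*} [DecidableEq W] {G : SimpleGraph W} (w : Sym2 W → ℕ)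
    {M₁ M₂ : Finset (Sym2 W)} (h1 : IsMatching G M₁) (h2 : IsMatching G M₂)
    (hdis : ∀ e ∈ M₁, ∀ f ∈ M₂, ∀ x ∈ e, x ∉ f) :
    IsMatching G (M₁ ∪ M₂) ∧ ∑ e ∈ M₁ ∪ M₂, w e = ∑ e ∈ M₁, w e + ∑ e ∈ M₂, w e := by
  have hdisj : Disjoint M₁ M₂ := by
    rw [Finset.disjoint_left]
    intro e he1 he2
    induction e using Sym2.ind with
    | _ a b => exact hdis _ he1 _ he2 a (Sym2.mem_mk_left a b) (Sym2.mem_mk_left a b)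
  constructor
  · refine ⟨fun e he => ?_, fun e he f hf hef x hxe hxf => ?_⟩
    · rcases Finset.mem_union.1 he with h | h
      exacts [h1.1 e h, h2.1 e h]
    · rcases Finset.mem_union.1 he with he | he <;> rcases Finset.mem_union.1 hf with hf | hf
      · exact h1.2 e he f hf hef x hxe hxf
      · exact hdis e he f hf x hxe hxf
      · exact hdis f hf e he x hxf hxe
      · exact h2.2 e he f hf hef x hxe hxf
  · exact Finset.sum_union hdisj

lemma matching_singleton {W : Type*} {G : SimpleGraph W} {e : Sym2 W}
    (h : e ∈ G.edgeSet) : IsMatching G {e} := by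
  refine ⟨by simp [h], ?_⟩
  intro e' he' f hf hne
  simp only [Finset.mem_singleton] at he' hf
  subst he'; subst hf
  exact absurd rfl hne

lemma pathOn_adj {ℓ : ℕ} {p : ℕ → V} {a b : V} :
    (pathOn ℓ p).Adj a b ↔ (∃ i < ℓ, s(a, b) = s(p i, p (i + 1))) ∧ a ≠ b := by
  simp [pathOn, SimpleGraph.fromEdgeSet_adj, Set.mem_setOf_eq]

lemma pathOn_le {G : SimpleGraph V} {ℓ : ℕ} {p : ℕ → V}
    (hsub : ∀ i < ℓ, G.Adj (p i) (p (i + 1))) : pathOn ℓ p ≤ G := by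
  intro a b hab
  rw [pathOn_adj] at hab
  obtain ⟨⟨i, hi, he⟩, _⟩ := hab
  rcases Sym2.eq_iff.1 he with ⟨rfl, rfl⟩ | ⟨rfl, rfl⟩
  · exact hsub i hi
  · exact (hsub i hi).symm

lemma deleteVerts_le {G : SimpleGraph V} {S : Set V} : deleteVerts G S ≤ G :=
  fun _ _ h => h.1

lemma deleteVerts_mono {G : SimpleGraph V} {S T : Set V} (hST : S ⊆ T) :
    deleteVerts G T ≤ deleteVerts G S :=
  fun _ _ h => ⟨h.1, fun hs => h.2.1 (hST hs), fun hs => h.2.2 (hST hs)⟩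

lemma deleteVerts_edgeSet {G : SimpleGraph V} {S : Set V} {e : Sym2 V} :
    e ∈ (deleteVerts G S).edgeSet ↔ e ∈ G.edgeSet ∧ ∀ x ∈ e, x ∉ S := by
  induction e using Sym2.ind with
  | _ a b =>
    simp only [SimpleGraph.mem_edgeSet, Sym2.mem_iff]
    constructor
    · rintro ⟨h, ha, hb⟩
      exact ⟨h, by rintro x (rfl | rfl) <;> assumption⟩
    · rintro ⟨h, hx⟩
      exact ⟨h, hx a (Or.inl rfl), hx b (Or.inr rfl)⟩

lemma pathOn_vertex {ℓ : ℕ} {p : ℕ → V} {e : Sym2 V} (he : e ∈ (pathOn ℓ p).edgeSet) :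
    ∀ x ∈ e, ∃ i ≤ ℓ, x = p i := by
  induction e using Sym2.ind with
  | _ a b =>
    rw [SimpleGraph.mem_edgeSet, pathOn_adj] at he
    obtain ⟨⟨i, hi, heq⟩, _⟩ := he
    intro x hx
    rw [Sym2.mem_iff] at hx
    rcases Sym2.eq_iff.1 heq with ⟨ha, hb⟩ | ⟨ha, hb⟩ <;> rcases hx with rfl | rfl
    · exact ⟨i, by omega, ha⟩
    · exact ⟨i + 1, by omega, hb⟩
    · exact ⟨i + 1, by omega, ha⟩
    · exact ⟨i, by omega, hb⟩

variable {G : SimpleGraph V} [DecidableRel G.Adj] {ℓ : ℕ} {p : ℕ → V}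

lemma internal_neighbor (hinj : ∀ i ≤ ℓ, ∀ j ≤ ℓ, p i = p j → i = j)
    (hsub : ∀ i < ℓ, G.Adj (p i) (p (i + 1)))
    (hdeg2 : ∀ i, 0 < i → i < ℓ → G.degree (p i) = 2)
    {i : ℕ} (h1 : 0 < i) (h2 : i < ℓ) {x : V} (hx : G.Adj (p i) x) :
    x = p (i - 1) ∨ x = p (i + 1) := by
  have hadj1 : G.Adj (p i) (p (i - 1)) := by
    have := hsub (i - 1) (by omega)
    rw [show i - 1 + 1 = i by omega] at this
    exact this.symm
  have hadj2 : G.Adj (p i) (p (i + 1)) := hsub i h2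
  have hne : p (i - 1) ≠ p (i + 1) := fun h => by
    have := hinj (i - 1) (by omega) (i + 1) (by omega) h; omega
  have hsubset : ({p (i - 1), p (i + 1)} : Finset V) ⊆ G.neighborFinset (p i) := by
    intro y hy
    rw [Finset.mem_insert, Finset.mem_singleton] at hy
    rcases hy with rfl | rfl <;> rw [SimpleGraph.mem_neighborFinset] <;> assumption
  have hcard : ({p (i - 1), p (i + 1)} : Finset V).card = 2 := by
    rw [Finset.card_insert_of_notMem (by simpa using hne), Finset.card_singleton]
  have heq : ({p (i - 1), p (i + 1)} : Finset V) = G.neighborFinset (p i) :=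
    Finset.eq_of_subset_of_card_le hsubset
      (by rw [hcard, SimpleGraph.card_neighborFinset_eq_degree, hdeg2 i h1 h2])
  have : x ∈ G.neighborFinset (p i) := (SimpleGraph.mem_neighborFinset _ _ _).2 hx
  rw [← heq, Finset.mem_insert, Finset.mem_singleton] at this
  exact this

lemma pathEdge_of_internal (hinj : ∀ i ≤ ℓ, ∀ j ≤ ℓ, p i = p j → i = j)
    (hsub : ∀ i < ℓ, G.Adj (p i) (p (i + 1)))
    (hdeg2 : ∀ i, 0 < i → i < ℓ → G.degree (p i) = 2)
    {a b : V} (hadj : G.Adj a b)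
    {i : ℕ} (h1 : 0 < i) (h2 : i < ℓ) (hpa : p i = a) :
    (pathOn ℓ p).Adj a b := by
  subst hpa
  rcases internal_neighbor hinj hsub hdeg2 h1 h2 hadj with rfl | rfl
  · refine pathOn_adj.2 ⟨⟨i - 1, by omega, ?_⟩, hadj.ne⟩
    rw [show i - 1 + 1 = i by omega, Sym2.eq_swap]
  · exact pathOn_adj.2 ⟨⟨i, h2, rfl⟩, hadj.ne⟩

end Helpers

/-- Maximal-path rule: let `P = p 0 p 1 … p ℓ` (with `ℓ ≥ 3`) be a maximal path of
`G` with endpoints `u = p 0` and `v = p ℓ`: internal vertices have degree 2 in `G`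
and the endpoints do not. Let `G'` be obtained by deleting the internal vertices of
`P`, adding a fresh vertex `z` with edges `uz` of weight `ω(P-v) - ω(P-u-v)` and
`vz` of weight `ω(P-u) - ω(P-u-v)`, and adding/setting the edge `uv` of weight
`max {ω(uv), ω(P) - ω(P-u-v)}` (where `ω(uv) = 0` if `uv ∉ E`). Then
`ω(G') = ω(G) - ω(P-u-v)`. -/
theorem stmt11 {V : Type*} [Fintype V] [DecidableEq V] (G : SimpleGraph V)
    [DecidableRel G.Adj] (w : Sym2 V → ℕ)
    (ℓ : ℕ) (hℓ : 3 ≤ ℓ) (p : ℕ → V)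
    (hinj : ∀ i ≤ ℓ, ∀ j ≤ ℓ, p i = p j → i = j)
    (hsub : ∀ i < ℓ, G.Adj (p i) (p (i + 1)))
    (hdeg2 : ∀ i, 0 < i → i < ℓ → G.degree (p i) = 2)
    (hdegu : G.degree (p 0) ≠ 2) (hdegv : G.degree (p ℓ) ≠ 2)
    (wP wPu wPv wPuv : ℕ)
    (hwP : wP = wmax (pathOn ℓ p) w)
    (hwPu : wPu = wmax (deleteVerts (pathOn ℓ p) {p 0}) w)
    (hwPv : wPv = wmax (deleteVerts (pathOn ℓ p) {p ℓ}) w)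
    (hwPuv : wPuv = wmax (deleteVerts (pathOn ℓ p) {p 0, p ℓ}) w) :
    wmax (pathReduced G ℓ p)
        (fun e =>
          if e = s(some (p 0), (none : Option V)) then wPv - wPuv
          else if e = s(some (p ℓ), (none : Option V)) then wPu - wPuv
          else if e = s(some (p 0), some (p ℓ)) then
            max (if G.Adj (p 0) (p ℓ) then w s(p 0, p ℓ) else 0) (wP - wPuv)
          else if (none : Option V) ∈ e then 0
          else w (e.map fun o => o.getD (p 0))) =
      wmax G w - wPuv := by
  classical
  have huv : p 0 ≠ p ℓ := fun h => by have := hinj 0 (by omega) ℓ le_rfl h; omega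
  set w' : Sym2 (Option V) → ℕ := fun e =>
    if e = s(some (p 0), (none : Option V)) then wPv - wPuv
    else if e = s(some (p ℓ), (none : Option V)) then wPu - wPuv
    else if e = s(some (p 0), some (p ℓ)) then
      max (if G.Adj (p 0) (p ℓ) then w s(p 0, p ℓ) else 0) (wP - wPuv)
    else if (none : Option V) ∈ e then 0
    else w (e.map fun o => o.getD (p 0)) with hw'
  set G' := pathReduced G ℓ p with hG'def
  have hPleG : pathOn ℓ p ≤ G := pathOn_le hsub
  have hb1 : wPuv ≤ wPu := by
    rw [hwPuv, hwPu]
    exact wmax_mono (deleteVerts_mono (by simp)) w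
  have hb2 : wPuv ≤ wPv := by
    rw [hwPuv, hwPv]
    exact wmax_mono (deleteVerts_mono (by simp)) w
  have hb3 : wPuv ≤ wP := by
    rw [hwPuv, hwP]
    exact wmax_mono deleteVerts_le w
  -- adjacency characterizations of G'
  have hG'ss : ∀ a b : V, G'.Adj (some a) (some b) ↔
      (a ≠ b ∧ (∀ i, 0 < i → i < ℓ → p i ≠ a) ∧ (∀ i, 0 < i → i < ℓ → p i ≠ b) ∧
        (G.Adj a b ∨ (a = p 0 ∧ b = p ℓ) ∨ (a = p ℓ ∧ b = p 0))) := fun a b => Iff.rfl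
  have hG'sn : ∀ a : V, G'.Adj (some a) none ↔ (a = p 0 ∨ a = p ℓ) := fun a => Iff.rfl
  have hG'nn : ¬ G'.Adj none none := fun h => h
  -- evaluations of w'
  have hwuz : w' s(some (p 0), (none : Option V)) = wPv - wPuv := by
    simp [hw']
  have hwvz : w' s(some (p ℓ), (none : Option V)) = wPu - wPuv := by
    simp [hw', Sym2.eq_iff, huv, Ne.symm huv]
  have hwuvv : w' s(some (p 0), some (p ℓ)) =
      max (if G.Adj (p 0) (p ℓ) then w s(p 0, p ℓ) else 0) (wP - wPuv) := by
    simp [hw', Sym2.eq_iff]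
  have hwsome : ∀ a b : V, s(some a, some b) ≠ s(some (p 0), some (p ℓ)) →
      w' s(some a, some b) = w s(a, b) := by
    intro a b hne
    simp only [hw']
    rw [if_neg (by simp [Sym2.eq_iff]), if_neg (by simp [Sym2.eq_iff]), if_neg hne,
      if_neg (by simp [Sym2.mem_iff]), Sym2.map_pair_eq]
    rfl
  have hIntu : ∀ i, 0 < i → i < ℓ → p i ≠ p 0 := fun i h1 h2 h => by
    have := hinj i (by omega) 0 (by omega) h; omega
  have hIntv : ∀ i, 0 < i → i < ℓ → p i ≠ p ℓ := fun i h1 h2 h => by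
    have := hinj i (by omega) ℓ le_rfl h; omega
  have dirA : wmax G w ≤ wmax G' w' + wPuv := by
    obtain ⟨M, hM, hMs⟩ := exists_wmax G w
    set M₁ := M.filter (fun e => ∃ x ∈ e, ∃ i, 0 < i ∧ i < ℓ ∧ p i = x) with hM₁
    set M₂ := M.filter (fun e => ¬ ∃ x ∈ e, ∃ i, 0 < i ∧ i < ℓ ∧ p i = x) with hM₂
    have hsplit : ∑ e ∈ M₁, w e + ∑ e ∈ M₂, w e = ∑ e ∈ M, w e :=
      Finset.sum_filter_add_sum_filter_not M _ w
    have hM₁M : M₁ ⊆ M := Finset.filter_subset _ _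
    have hM₂M : M₂ ⊆ M := Finset.filter_subset _ _
    have hM₁path : ∀ e ∈ M₁, e ∈ (pathOn ℓ p).edgeSet := by
      intro e
      induction e using Sym2.ind with
      | _ a b =>
        intro he
        obtain ⟨heM, x, hx, i, hi1, hi2, hpx⟩ := Finset.mem_filter.1 he
        have hadj : G.Adj a b := (SimpleGraph.mem_edgeSet _).1 (hM.1 _ heM)
        rw [Sym2.mem_iff] at hx
        rcases hx with rfl | rfl
        · exact (SimpleGraph.mem_edgeSet _).2
            (pathEdge_of_internal hinj hsub hdeg2 hadj hi1 hi2 hpx)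
        · exact (SimpleGraph.mem_edgeSet _).2
            (pathEdge_of_internal hinj hsub hdeg2 hadj.symm hi1 hi2 hpx).symm
    have hM₁m : ∀ (S : Set V), (∀ x ∈ S, ∀ f ∈ M₁, x ∉ f) →
        IsMatching (deleteVerts (pathOn ℓ p) S) M₁ := by
      intro S hS
      exact ⟨fun e he => deleteVerts_edgeSet.2
          ⟨hM₁path e he, fun x hx hxS => hS x hxS e he hx⟩,
        fun e he f hf => hM.2 e (hM₁M he) f (hM₁M hf)⟩
    have havoid : ∀ x : V, (∃ f ∈ M₁, x ∈ f) → ∀ g ∈ M₂, x ∉ g := by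
      rintro x ⟨f, hf, hxf⟩ g hg hxg
      have hfP := (Finset.mem_filter.1 hf).2
      have hgP := (Finset.mem_filter.1 hg).2
      have hfg : f ≠ g := fun h => hgP (h ▸ hfP)
      exact hM.2 f (hM₁M hf) g (hM₂M hg) hfg x hxf hxg
    have hupinj : Function.Injective (Sym2.map (some : V → Option V)) :=
      Sym2.map.injective (Option.some_injective V)
    set M₂' := M₂.image (Sym2.map (some : V → Option V)) with hM₂'def
    have hM₂'sum : ∑ e ∈ M₂', w' e = ∑ e ∈ M₂, w' (Sym2.map some e) :=
      Finset.sum_image (fun x _ y _ h => hupinj h)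
    have hM₂char : ∀ a b : V, s(a, b) ∈ M₂ → G.Adj a b ∧
        (∀ i, 0 < i → i < ℓ → p i ≠ a) ∧ (∀ i, 0 < i → i < ℓ → p i ≠ b) := by
      intro a b he
      obtain ⟨heM, hnP⟩ := Finset.mem_filter.1 he
      refine ⟨(SimpleGraph.mem_edgeSet _).1 (hM.1 _ heM), ?_, ?_⟩
      · intro i h1 h2 h; exact hnP ⟨a, Sym2.mem_mk_left a b, i, h1, h2, h⟩
      · intro i h1 h2 h; exact hnP ⟨b, Sym2.mem_mk_right a b, i, h1, h2, h⟩
    have hM₂w : ∀ e ∈ M₂, w e ≤ w' (Sym2.map some e) := by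
      intro e
      induction e using Sym2.ind with
      | _ a b =>
        intro he
        rw [Sym2.map_pair_eq]
        by_cases heq : s((some a : Option V), some b) = s(some (p 0), some (p ℓ))
        · have hGadjab : G.Adj a b := (hM₂char a b he).1
          rw [heq, hwuvv]
          rw [Sym2.eq_iff] at heq
          have hab : s(a, b) = s(p 0, p ℓ) ∧ G.Adj (p 0) (p ℓ) := by
            rcases heq with ⟨h1, h2⟩ | ⟨h1, h2⟩
            · obtain rfl := Option.some_injective V h1
              obtain rfl := Option.some_injective V h2
              exact ⟨rfl, hGadjab⟩
            · obtain rfl := Option.some_injective V h1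
              obtain rfl := Option.some_injective V h2
              exact ⟨Sym2.eq_swap, hGadjab.symm⟩
          rw [hab.1, if_pos hab.2]
          exact le_max_left _ _
        · rw [hwsome a b heq]
    have hB2 : ∑ e ∈ M₂, w e ≤ ∑ e ∈ M₂', w' e := by
      rw [hM₂'sum]; exact Finset.sum_le_sum hM₂w
    have hedge : ∀ a b : V, s(a, b) ∈ M₂ → G'.Adj (some a) (some b) := by
      intro a b he
      obtain ⟨hadj, hia, hib⟩ := hM₂char a b he
      exact (hG'ss a b).2 ⟨hadj.ne, hia, hib, Or.inl hadj⟩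
    have hM₂'G : IsMatching G' M₂' := by
      constructor
      · intro d hd
        obtain ⟨e, he, rfl⟩ := Finset.mem_image.1 hd
        revert he
        induction e using Sym2.ind with
        | _ a b =>
          intro he
          rw [Sym2.map_pair_eq]
          exact (SimpleGraph.mem_edgeSet _).2 (hedge a b he)
      · intro d1 hd1 d2 hd2 hne x hx1 hx2
        obtain ⟨e1, he1, rfl⟩ := Finset.mem_image.1 hd1
        obtain ⟨e2, he2, rfl⟩ := Finset.mem_image.1 hd2
        have h12 : e1 ≠ e2 := fun h => hne (by rw [h])
        obtain ⟨y1, hy1, hxy1⟩ := Sym2.mem_map.1 hx1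
        obtain ⟨y2, hy2, hxy2⟩ := Sym2.mem_map.1 hx2
        obtain rfl : y1 = y2 := Option.some_injective V (hxy1.trans hxy2.symm)
        exact hM.2 e1 (hM₂M he1) e2 (hM₂M he2) h12 y1 hy1 hy2
    have hnone' : ∀ d ∈ M₂', (none : Option V) ∉ d := by
      intro d hd hmem
      obtain ⟨e, he, rfl⟩ := Finset.mem_image.1 hd
      obtain ⟨y, hy, hxy⟩ := Sym2.mem_map.1 hmem
      exact Option.some_ne_none y hxy
    have hsome_not : ∀ x : V, (∃ f ∈ M₁, x ∈ f) → ∀ d ∈ M₂', some x ∉ d := by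
      intro x hx d hd hmem
      obtain ⟨e, he, rfl⟩ := Finset.mem_image.1 hd
      obtain ⟨y, hy, hxy⟩ := Sym2.mem_map.1 hmem
      obtain rfl : y = x := Option.some_injective V hxy
      exact havoid _ hx e he hy
    by_cases hcu : ∃ f ∈ M₁, p 0 ∈ f
    · by_cases hcv : ∃ f ∈ M₁, p ℓ ∈ f
      · -- both endpoints matched inside the path: use special edge uv
        have hB1 : ∑ e ∈ M₁, w e ≤ wP := by
          rw [hwP]
          exact le_wmax ⟨hM₁path, fun e he f hf => hM.2 e (hM₁M he) f (hM₁M hf)⟩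
        have heuv : s(some (p 0), some (p ℓ)) ∈ G'.edgeSet :=
          (SimpleGraph.mem_edgeSet _).2 ((hG'ss _ _).2
            ⟨huv, hIntu, hIntv, Or.inr (Or.inl ⟨rfl, rfl⟩)⟩)
        have hd0 : ∀ e ∈ ({s(some (p 0), some (p ℓ))} : Finset (Sym2 (Option V))),
            ∀ f ∈ M₂', ∀ x ∈ e, x ∉ f := by
          intro e he f hf x hx
          rw [Finset.mem_singleton] at he
          subst he
          rw [Sym2.mem_iff] at hx
          rcases hx with rfl | rfl
          · exact hsome_not (p 0) hcu f hf
          · exact hsome_not (p ℓ) hcv f hf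
        obtain ⟨hMm', hMs'⟩ := matching_union w' (matching_singleton heuv) hM₂'G hd0
        have hfin : w' s(some (p 0), some (p ℓ)) + ∑ e ∈ M₂', w' e ≤ wmax G' w' := by
          have h := le_wmax (w := w') hMm'
          rw [hMs', Finset.sum_singleton] at h
          exact h
        have huvval : wP - wPuv ≤ w' s(some (p 0), some (p ℓ)) := by
          rw [hwuvv]; exact le_max_right _ _
        omega
      · -- only u matched inside the path: use special edge uz
        have hB1 : ∑ e ∈ M₁, w e ≤ wPv := by
          rw [hwPv]
          refine le_wmax (hM₁m {p ℓ} ?_)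
          rintro x hx f hf hxf
          rw [Set.mem_singleton_iff] at hx
          exact hcv ⟨f, hf, hx ▸ hxf⟩
        have heuz : s(some (p 0), (none : Option V)) ∈ G'.edgeSet :=
          (SimpleGraph.mem_edgeSet _).2 ((hG'sn _).2 (Or.inl rfl))
        have hd0 : ∀ e ∈ ({s(some (p 0), (none : Option V))} : Finset (Sym2 (Option V))),
            ∀ f ∈ M₂', ∀ x ∈ e, x ∉ f := by
          intro e he f hf x hx
          rw [Finset.mem_singleton] at he
          subst he
          rw [Sym2.mem_iff] at hx
          rcases hx with rfl | rfl
          · exact hsome_not (p 0) hcu f hf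
          · exact hnone' f hf
        obtain ⟨hMm', hMs'⟩ := matching_union w' (matching_singleton heuz) hM₂'G hd0
        have hfin : w' s(some (p 0), (none : Option V)) + ∑ e ∈ M₂', w' e ≤ wmax G' w' := by
          have h := le_wmax (w := w') hMm'
          rw [hMs', Finset.sum_singleton] at h
          exact h
        rw [hwuz] at hfin
        omega
    · by_cases hcv : ∃ f ∈ M₁, p ℓ ∈ f
      · -- only v matched inside the path: use special edge vz
        have hB1 : ∑ e ∈ M₁, w e ≤ wPu := by
          rw [hwPu]
          refine le_wmax (hM₁m {p 0} ?_)
          rintro x hx f hf hxf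
          rw [Set.mem_singleton_iff] at hx
          exact hcu ⟨f, hf, hx ▸ hxf⟩
        have hevz : s(some (p ℓ), (none : Option V)) ∈ G'.edgeSet :=
          (SimpleGraph.mem_edgeSet _).2 ((hG'sn _).2 (Or.inr rfl))
        have hd0 : ∀ e ∈ ({s(some (p ℓ), (none : Option V))} : Finset (Sym2 (Option V))),
            ∀ f ∈ M₂', ∀ x ∈ e, x ∉ f := by
          intro e he f hf x hx
          rw [Finset.mem_singleton] at he
          subst he
          rw [Sym2.mem_iff] at hx
          rcases hx with rfl | rfl
          · exact hsome_not (p ℓ) hcv f hf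
          · exact hnone' f hf
        obtain ⟨hMm', hMs'⟩ := matching_union w' (matching_singleton hevz) hM₂'G hd0
        have hfin : w' s(some (p ℓ), (none : Option V)) + ∑ e ∈ M₂', w' e ≤ wmax G' w' := by
          have h := le_wmax (w := w') hMm'
          rw [hMs', Finset.sum_singleton] at h
          exact h
        rw [hwvz] at hfin
        omega
      · -- neither endpoint matched inside the path
        have hB1 : ∑ e ∈ M₁, w e ≤ wPuv := by
          rw [hwPuv]
          refine le_wmax (hM₁m {p 0, p ℓ} ?_)
          rintro x hx f hf hxf
          rcases hx with rfl | hx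
          · exact hcu ⟨f, hf, hxf⟩
          · rw [Set.mem_singleton_iff] at hx
            exact hcv ⟨f, hf, hx ▸ hxf⟩
        have hfin : ∑ e ∈ M₂', w' e ≤ wmax G' w' := le_wmax hM₂'G
        omega
  have dirB : wmax G' w' + wPuv ≤ wmax G w := by
    obtain ⟨M', hM', hM's⟩ := exists_wmax G' w'
    have hzedge : ∀ e ∈ M', (none : Option V) ∈ e →
        e = s(some (p 0), (none : Option V)) ∨ e = s(some (p ℓ), (none : Option V)) := by
      intro e
      induction e using Sym2.ind with
      | _ x y =>
        intro he hz
        have hadj : G'.Adj x y := (SimpleGraph.mem_edgeSet _).1 (hM'.1 _ he)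
        rcases Sym2.mem_iff.1 hz with rfl | rfl
        · obtain _ | b := y
          · exact absurd hadj hG'nn
          · have hb : b = p 0 ∨ b = p ℓ := hadj.symm
            rw [Sym2.eq_swap]
            rcases hb with rfl | rfl
            · exact Or.inl rfl
            · exact Or.inr rfl
        · obtain _ | a := x
          · exact absurd hadj hG'nn
          · have ha : a = p 0 ∨ a = p ℓ := hadj
            rcases ha with rfl | rfl
            · exact Or.inl rfl
            · exact Or.inr rfl
    have hchar : ∀ e ∈ M', (none : Option V) ∉ e → e ≠ s(some (p 0), some (p ℓ)) →
        ∃ a b : V, e = s(some a, some b) ∧ G.Adj a b ∧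
          (∀ i, 0 < i → i < ℓ → p i ≠ a) ∧ (∀ i, 0 < i → i < ℓ → p i ≠ b) := by
      intro e
      induction e using Sym2.ind with
      | _ x y =>
        intro he hz hnuv
        obtain _ | a := x
        · exact absurd (Sym2.mem_mk_left _ _) hz
        obtain _ | b := y
        · exact absurd (Sym2.mem_mk_right _ _) hz
        obtain ⟨hne, hia, hib, hor⟩ := (hG'ss a b).1 ((SimpleGraph.mem_edgeSet _).1 (hM'.1 _ he))
        refine ⟨a, b, rfl, ?_, hia, hib⟩
        rcases hor with h | ⟨rfl, rfl⟩ | ⟨rfl, rfl⟩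
        · exact h
        · exact absurd rfl hnuv
        · exact absurd (Sym2.eq_swap) hnuv
    have glue : ∀ (R : Finset (Sym2 (Option V))) (N : Finset (Sym2 V)),
        R ⊆ M' →
        (∀ e ∈ R, (none : Option V) ∉ e ∧ e ≠ s(some (p 0), some (p ℓ))) →
        IsMatching G N →
        (∀ f ∈ N, ∀ x ∈ f, (∃ i, 0 < i ∧ i < ℓ ∧ p i = x) ∨
          (x = p 0 ∧ ∀ e ∈ R, some (p 0) ∉ e) ∨ (x = p ℓ ∧ ∀ e ∈ R, some (p ℓ) ∉ e)) →
        ∃ M : Finset (Sym2 V), IsMatching G M ∧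
          ∑ e ∈ M, w e = ∑ e ∈ R, w' e + ∑ f ∈ N, w f := by
      intro R N hRM hRz hN hNv
      have hRchar : ∀ e ∈ R, ∃ a b : V, e = s(some a, some b) ∧ G.Adj a b ∧
          (∀ i, 0 < i → i < ℓ → p i ≠ a) ∧ (∀ i, 0 < i → i < ℓ → p i ≠ b) :=
        fun e he => hchar e (hRM he) (hRz e he).1 (hRz e he).2
      set dn : Sym2 (Option V) → Sym2 V := Sym2.map (fun o => o.getD (p 0)) with hdn
      have hdn_pair : ∀ a b : V, dn s(some a, some b) = s(a, b) := by
        intro a b; rw [hdn, Sym2.map_pair_eq]; rfl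
      have hup_dn : ∀ e ∈ R, Sym2.map some (dn e) = e := by
        intro e he; obtain ⟨a, b, rfl, -⟩ := hRchar e he
        rw [hdn_pair, Sym2.map_pair_eq]
      have hinjdn : ∀ e ∈ R, ∀ f ∈ R, dn e = dn f → e = f := by
        intro e he f hf h
        rw [← hup_dn e he, ← hup_dn f hf, h]
      have hmemdn : ∀ e ∈ R, ∀ x : V, x ∈ dn e → some x ∈ e := by
        intro e he x hx
        obtain ⟨a, b, rfl, -⟩ := hRchar e he
        rw [hdn_pair, Sym2.mem_iff] at hx
        rcases hx with rfl | rfl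
        · exact Sym2.mem_mk_left _ _
        · exact Sym2.mem_mk_right _ _
      have hwdn : ∀ e ∈ R, w' e = w (dn e) := by
        intro e he; obtain ⟨a, b, rfl, hadj, -⟩ := hRchar e he
        rw [hdn_pair, hwsome a b (hRz _ he).2]
      set Ri := R.image dn with hRi
      have hRisum : ∑ e ∈ Ri, w e = ∑ e ∈ R, w' e := by
        rw [hRi, Finset.sum_image hinjdn]
        exact Finset.sum_congr rfl fun e he => (hwdn e he).symm
      have hRimatch : IsMatching G Ri := by
        constructor
        · intro d hd
          obtain ⟨e, he, rfl⟩ := Finset.mem_image.1 hd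
          obtain ⟨a, b, rfl, hadj, -⟩ := hRchar e he
          rw [hdn_pair]
          exact (SimpleGraph.mem_edgeSet _).2 hadj
        · intro d1 hd1 d2 hd2 hne x hx1 hx2
          obtain ⟨e1, he1, rfl⟩ := Finset.mem_image.1 hd1
          obtain ⟨e2, he2, rfl⟩ := Finset.mem_image.1 hd2
          have he12 : e1 ≠ e2 := fun h => hne (by rw [h])
          exact hM'.2 e1 (hRM he1) e2 (hRM he2) he12 (some x)
            (hmemdn e1 he1 x hx1) (hmemdn e2 he2 x hx2)
      have hdis : ∀ d ∈ Ri, ∀ f ∈ N, ∀ x ∈ d, x ∉ f := by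
        intro d hd f hf x hxd hxf
        obtain ⟨e, he, rfl⟩ := Finset.mem_image.1 hd
        have hxe : some x ∈ e := hmemdn e he x hxd
        obtain ⟨a, b, heq, hadj, hia, hib⟩ := hRchar e he
        rcases hNv f hf x hxf with ⟨i, hi1, hi2, hpx⟩ | ⟨rfl, hav⟩ | ⟨rfl, hav⟩
        · subst heq
          rw [Sym2.mem_iff] at hxe
          rcases hxe with h | h
          · exact hia i hi1 hi2 (hpx.trans (Option.some_injective V h))
          · exact hib i hi1 hi2 (hpx.trans (Option.some_injective V h))
        · exact hav e he hxe
        · exact hav e he hxe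
      obtain ⟨hMm, hMs⟩ := matching_union w hRimatch hN hdis
      exact ⟨Ri ∪ N, hMm, by rw [hMs, hRisum]⟩
    -- vertex classification for deleteVerts path matchings
    have hNclass : ∀ (S : Set V) (N : Finset (Sym2 V)),
        IsMatching (deleteVerts (pathOn ℓ p) S) N →
        ∀ f ∈ N, ∀ x ∈ f, (∃ i ≤ ℓ, x = p i) ∧ x ∉ S := by
      intro S N hN f hf x hx
      have := deleteVerts_edgeSet.1 (hN.1 f hf)
      exact ⟨pathOn_vertex this.1 x hx, this.2 x hx⟩
    by_cases huz : s(some (p 0), (none : Option V)) ∈ M'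
    · -- special edge uz present
      set R := M'.erase s(some (p 0), (none : Option V)) with hR
      have hRM : R ⊆ M' := Finset.erase_subset _ _
      have hsum : w' s(some (p 0), (none : Option V)) + ∑ e ∈ R, w' e = ∑ e ∈ M', w' e :=
        Finset.add_sum_erase _ _ huz
      have havu : ∀ e ∈ R, some (p 0) ∉ e := by
        intro e he hm
        obtain ⟨hne, heM⟩ := Finset.mem_erase.1 he
        exact hM'.2 e heM _ huz hne (some (p 0)) hm (Sym2.mem_mk_left _ _)
      have hRz : ∀ e ∈ R, (none : Option V) ∉ e ∧ e ≠ s(some (p 0), some (p ℓ)) := by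
        intro e he
        obtain ⟨hne, heM⟩ := Finset.mem_erase.1 he
        constructor
        · intro hz
          exact hM'.2 e heM _ huz hne none hz (Sym2.mem_mk_right _ _)
        · rintro rfl
          exact havu _ he (Sym2.mem_mk_left _ _)
      obtain ⟨N, hN, hNs⟩ := exists_wmax (deleteVerts (pathOn ℓ p) {p ℓ}) w
      have hNG : IsMatching G N := hN.mono (le_trans deleteVerts_le hPleG)
      have hNvert : ∀ f ∈ N, ∀ x ∈ f, (∃ i, 0 < i ∧ i < ℓ ∧ p i = x) ∨
          (x = p 0 ∧ ∀ e ∈ R, some (p 0) ∉ e) ∨ (x = p ℓ ∧ ∀ e ∈ R, some (p ℓ) ∉ e) := by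
        intro f hf x hx
        obtain ⟨⟨i, hi, rfl⟩, hxS⟩ := hNclass _ N hN f hf x hx
        rcases Nat.eq_zero_or_pos i with rfl | hipos
        · exact Or.inr (Or.inl ⟨rfl, havu⟩)
        · rcases eq_or_lt_of_le hi with rfl | hilt
          · exact absurd rfl hxS
          · exact Or.inl ⟨i, hipos, hilt, rfl⟩
      obtain ⟨M, hMm, hMs⟩ := glue R N hRM hRz hNG hNvert
      have hfin : ∑ e ∈ M, w e ≤ wmax G w := le_wmax hMm
      rw [hwuz] at hsum
      rw [← hwPv] at hNs
      omega
    · by_cases hvz : s(some (p ℓ), (none : Option V)) ∈ M'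
      · set R := M'.erase s(some (p ℓ), (none : Option V)) with hR
        have hRM : R ⊆ M' := Finset.erase_subset _ _
        have hsum : w' s(some (p ℓ), (none : Option V)) + ∑ e ∈ R, w' e = ∑ e ∈ M', w' e :=
          Finset.add_sum_erase _ _ hvz
        have havv : ∀ e ∈ R, some (p ℓ) ∉ e := by
          intro e he hm
          obtain ⟨hne, heM⟩ := Finset.mem_erase.1 he
          exact hM'.2 e heM _ hvz hne (some (p ℓ)) hm (Sym2.mem_mk_left _ _)
        have hRz : ∀ e ∈ R, (none : Option V) ∉ e ∧ e ≠ s(some (p 0), some (p ℓ)) := by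
          intro e he
          obtain ⟨hne, heM⟩ := Finset.mem_erase.1 he
          constructor
          · intro hz
            exact hM'.2 e heM _ hvz hne none hz (Sym2.mem_mk_right _ _)
          · rintro rfl
            exact havv _ he (Sym2.mem_mk_right _ _)
        obtain ⟨N, hN, hNs⟩ := exists_wmax (deleteVerts (pathOn ℓ p) {p 0}) w
        have hNG : IsMatching G N := hN.mono (le_trans deleteVerts_le hPleG)
        have hNvert : ∀ f ∈ N, ∀ x ∈ f, (∃ i, 0 < i ∧ i < ℓ ∧ p i = x) ∨
            (x = p 0 ∧ ∀ e ∈ R, some (p 0) ∉ e) ∨ (x = p ℓ ∧ ∀ e ∈ R, some (p ℓ) ∉ e) := by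
          intro f hf x hx
          obtain ⟨⟨i, hi, rfl⟩, hxS⟩ := hNclass _ N hN f hf x hx
          rcases Nat.eq_zero_or_pos i with rfl | hipos
          · exact absurd rfl hxS
          · rcases eq_or_lt_of_le hi with rfl | hilt
            · exact Or.inr (Or.inr ⟨rfl, havv⟩)
            · exact Or.inl ⟨i, hipos, hilt, rfl⟩
        obtain ⟨M, hMm, hMs⟩ := glue R N hRM hRz hNG hNvert
        have hfin : ∑ e ∈ M, w e ≤ wmax G w := le_wmax hMm
        rw [hwvz] at hsum
        rw [← hwPu] at hNs
        omega
      · by_cases huvm : s(some (p 0), some (p ℓ)) ∈ M'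
        · set R := M'.erase s(some (p 0), some (p ℓ)) with hR
          have hRM : R ⊆ M' := Finset.erase_subset _ _
          have hsum : w' s(some (p 0), some (p ℓ)) + ∑ e ∈ R, w' e = ∑ e ∈ M', w' e :=
            Finset.add_sum_erase _ _ huvm
          have havu : ∀ e ∈ R, some (p 0) ∉ e := by
            intro e he hm
            obtain ⟨hne, heM⟩ := Finset.mem_erase.1 he
            exact hM'.2 e heM _ huvm hne (some (p 0)) hm (Sym2.mem_mk_left _ _)
          have havv : ∀ e ∈ R, some (p ℓ) ∉ e := by
            intro e he hm
            obtain ⟨hne, heM⟩ := Finset.mem_erase.1 he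
            exact hM'.2 e heM _ huvm hne (some (p ℓ)) hm (Sym2.mem_mk_right _ _)
          have hRz : ∀ e ∈ R, (none : Option V) ∉ e ∧ e ≠ s(some (p 0), some (p ℓ)) := by
            intro e he
            refine ⟨?_, (Finset.mem_erase.1 he).1⟩
            intro hz
            rcases hzedge e (hRM he) hz with rfl | rfl
            · exact huz (hRM he)
            · exact hvz (hRM he)
          rw [hwuvv] at hsum
          by_cases hadjuv : G.Adj (p 0) (p ℓ)
          · rcases le_total (w s(p 0, p ℓ)) (wP - wPuv) with hle | hle
            · -- use max = wP - wPuv, N = max matching of pathOn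
              rw [if_pos hadjuv, max_eq_right hle] at hsum
              obtain ⟨N, hN, hNs⟩ := exists_wmax (pathOn ℓ p) w
              have hNG : IsMatching G N := hN.mono hPleG
              have hNvert : ∀ f ∈ N, ∀ x ∈ f, (∃ i, 0 < i ∧ i < ℓ ∧ p i = x) ∨
                  (x = p 0 ∧ ∀ e ∈ R, some (p 0) ∉ e) ∨
                  (x = p ℓ ∧ ∀ e ∈ R, some (p ℓ) ∉ e) := by
                intro f hf x hx
                obtain ⟨i, hi, rfl⟩ := pathOn_vertex (hN.1 f hf) x hx
                rcases Nat.eq_zero_or_pos i with rfl | hipos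
                · exact Or.inr (Or.inl ⟨rfl, havu⟩)
                · rcases eq_or_lt_of_le hi with rfl | hilt
                  · exact Or.inr (Or.inr ⟨rfl, havv⟩)
                  · exact Or.inl ⟨i, hipos, hilt, rfl⟩
              obtain ⟨M, hMm, hMs⟩ := glue R N hRM hRz hNG hNvert
              have hfin : ∑ e ∈ M, w e ≤ wmax G w := le_wmax hMm
              rw [← hwP] at hNs
              omega
            · -- use max = w(uv); N = {uv} ∪ Nuv
              rw [if_pos hadjuv, max_eq_left hle] at hsum
              obtain ⟨N0, hN0, hN0s⟩ := exists_wmax (deleteVerts (pathOn ℓ p) {p 0, p ℓ}) w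
              have hN0G : IsMatching G N0 := hN0.mono (le_trans deleteVerts_le hPleG)
              have hN0int : ∀ f ∈ N0, ∀ x ∈ f, ∃ i, 0 < i ∧ i < ℓ ∧ p i = x := by
                intro f hf x hx
                obtain ⟨⟨i, hi, rfl⟩, hxS⟩ := hNclass _ N0 hN0 f hf x hx
                simp only [Set.mem_insert_iff, Set.mem_singleton_iff, not_or] at hxS
                rcases Nat.eq_zero_or_pos i with rfl | hipos
                · exact absurd rfl hxS.1
                · rcases eq_or_lt_of_le hi with rfl | hilt
                  · exact absurd rfl hxS.2
                  · exact ⟨i, hipos, hilt, rfl⟩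
              have hsing : IsMatching G {s(p 0, p ℓ)} :=
                matching_singleton ((SimpleGraph.mem_edgeSet _).2 hadjuv)
              have hdis0 : ∀ e ∈ ({s(p 0, p ℓ)} : Finset (Sym2 V)), ∀ f ∈ N0,
                  ∀ x ∈ e, x ∉ f := by
                intro e he f hf x hx hxf
                rw [Finset.mem_singleton] at he
                subst he
                obtain ⟨i, hi1, hi2, hpx⟩ := hN0int f hf x hxf
                rw [Sym2.mem_iff] at hx
                rcases hx with rfl | rfl
                · exact hIntu i hi1 hi2 hpx
                · exact hIntv i hi1 hi2 hpx
              obtain ⟨hNm, hNsum⟩ := matching_union w hsing hN0G hdis0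
              have hNvert : ∀ f ∈ {s(p 0, p ℓ)} ∪ N0, ∀ x ∈ f,
                  (∃ i, 0 < i ∧ i < ℓ ∧ p i = x) ∨
                  (x = p 0 ∧ ∀ e ∈ R, some (p 0) ∉ e) ∨
                  (x = p ℓ ∧ ∀ e ∈ R, some (p ℓ) ∉ e) := by
                intro f hf x hx
                rcases Finset.mem_union.1 hf with hf | hf
                · rw [Finset.mem_singleton] at hf
                  subst hf
                  rw [Sym2.mem_iff] at hx
                  rcases hx with rfl | rfl
                  · exact Or.inr (Or.inl ⟨rfl, havu⟩)
                  · exact Or.inr (Or.inr ⟨rfl, havv⟩)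
                · exact Or.inl (hN0int f hf x hx)
              obtain ⟨M, hMm, hMs⟩ := glue R ({s(p 0, p ℓ)} ∪ N0) hRM hRz hNm hNvert
              have hfin : ∑ e ∈ M, w e ≤ wmax G w := le_wmax hMm
              rw [hNsum, Finset.sum_singleton] at hMs
              rw [← hwPuv] at hN0s
              omega
          · -- uv not an edge of G: max = wP - wPuv
            rw [if_neg hadjuv] at hsum
            have hmax0 : max 0 (wP - wPuv) = wP - wPuv := by omega
            rw [hmax0] at hsum
            obtain ⟨N, hN, hNs⟩ := exists_wmax (pathOn ℓ p) w
            have hNG : IsMatching G N := hN.mono hPleG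
            have hNvert : ∀ f ∈ N, ∀ x ∈ f, (∃ i, 0 < i ∧ i < ℓ ∧ p i = x) ∨
                (x = p 0 ∧ ∀ e ∈ R, some (p 0) ∉ e) ∨
                (x = p ℓ ∧ ∀ e ∈ R, some (p ℓ) ∉ e) := by
              intro f hf x hx
              obtain ⟨i, hi, rfl⟩ := pathOn_vertex (hN.1 f hf) x hx
              rcases Nat.eq_zero_or_pos i with rfl | hipos
              · exact Or.inr (Or.inl ⟨rfl, havu⟩)
              · rcases eq_or_lt_of_le hi with rfl | hilt
                · exact Or.inr (Or.inr ⟨rfl, havv⟩)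
                · exact Or.inl ⟨i, hipos, hilt, rfl⟩
            obtain ⟨M, hMm, hMs⟩ := glue R N hRM hRz hNG hNvert
            have hfin : ∑ e ∈ M, w e ≤ wmax G w := le_wmax hMm
            rw [← hwP] at hNs
            omega
        · -- no special edge in M'
          have hRz : ∀ e ∈ M', (none : Option V) ∉ e ∧ e ≠ s(some (p 0), some (p ℓ)) := by
            intro e he
            constructor
            · intro hz
              rcases hzedge e he hz with rfl | rfl
              · exact huz he
              · exact hvz he
            · rintro rfl
              exact huvm he
          obtain ⟨N, hN, hNs⟩ := exists_wmax (deleteVerts (pathOn ℓ p) {p 0, p ℓ}) w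
          have hNG : IsMatching G N := hN.mono (le_trans deleteVerts_le hPleG)
          have hNvert : ∀ f ∈ N, ∀ x ∈ f, (∃ i, 0 < i ∧ i < ℓ ∧ p i = x) ∨
              (x = p 0 ∧ ∀ e ∈ M', some (p 0) ∉ e) ∨
              (x = p ℓ ∧ ∀ e ∈ M', some (p ℓ) ∉ e) := by
            intro f hf x hx
            obtain ⟨⟨i, hi, rfl⟩, hxS⟩ := hNclass _ N hN f hf x hx
            simp only [Set.mem_insert_iff, Set.mem_singleton_iff, not_or] at hxS
            rcases Nat.eq_zero_or_pos i with rfl | hipos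
            · exact absurd rfl hxS.1
            · rcases eq_or_lt_of_le hi with rfl | hilt
              · exact absurd rfl hxS.2
              · exact Or.inl ⟨i, hipos, hilt, rfl⟩
          obtain ⟨M, hMm, hMs⟩ := glue M' N Finset.Subset.rfl hRz hNG hNvert
          have hfin : ∑ e ∈ M, w e ≤ wmax G w := le_wmax hMm
          rw [← hwPuv] at hNs
          omega
  omega
end
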